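/- In ℝ^d (d ≥ 3), the Hessians of the homogeneous polynomials p₄(q) = Σᵢ qᵢ⁴ + c̃ Σ_{i<j} qᵢ²qⱼ² and p₆(q) = Σᵢ qᵢ⁶ + ã Σ_{i,j} qᵢ⁴qⱼ² + b̃ Σ_{i<j<k} qᵢ²qⱼ²q_k² commute at every point q ∈ ℝ^d, provided ã = 15c̃/(12−c̃) and b̃ = 75c̃²/((12−c̃)(3+c̃)), with c̃ ≠ 12 and c̃ ≠ −3. -/

import Mathlib

open Finset



/-- Partial derivative of `f : (Fin d → ℝ) → ℝ` in the `i`-th coordinate direction. -/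
noncomputable def pderivCoord {d : ℕ} (i : Fin d) (f : (Fin d → ℝ) → ℝ) :
    (Fin d → ℝ) → ℝ :=
  fun q => deriv (fun s => f (Function.update q i s)) (q i)

/-- Hessian matrix of `f` at the point `q`. -/
noncomputable def hessian {d : ℕ} (f : (Fin d → ℝ) → ℝ) (q : Fin d → ℝ) :
    Matrix (Fin d) (Fin d) ℝ :=
  fun i j => pderivCoord i (pderivCoord j f) q

/-- `p₄(q) = Σᵢ qᵢ⁴ + c̃ Σ_{j<i} qᵢ²qⱼ²`. -/
def poly4 (d : ℕ) (c : ℝ) (q : Fin d → ℝ) : ℝ :=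
  (∑ i, q i ^ 4) + c * ∑ i, ∑ j ∈ Finset.univ.filter (fun j => j < i), q i ^ 2 * q j ^ 2

/-- `p₆(q) = Σᵢ qᵢ⁶ + ã Σ_{i≠j} qᵢ⁴qⱼ² + b̃ Σ_{i<j<k} qᵢ²qⱼ²q_k²`. -/
def poly6 (d : ℕ) (a b : ℝ) (q : Fin d → ℝ) : ℝ :=
  (∑ i, q i ^ 6)
    + a * ∑ i, ∑ j ∈ Finset.univ.filter (fun j => j ≠ i), q i ^ 4 * q j ^ 2
    + b * ∑ i, ∑ j ∈ Finset.univ.filter (fun j => j < i),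
        ∑ k ∈ Finset.univ.filter (fun k => k < j), q i ^ 2 * q j ^ 2 * q k ^ 2

/-- Sum of m-th powers after updating one coordinate. -/
lemma sum_update_pow {d : ℕ} (q : Fin d → ℝ) (i : Fin d) (s : ℝ) (m : ℕ) :
    ∑ j, Function.update q i s j ^ m = s ^ m + ((∑ j, q j ^ m) - q i ^ m) := by
  have h : ∀ j, Function.update q i s j ^ m
      = Function.update (fun j => q j ^ m) i (s ^ m) j := by
    intro j
    rcases eq_or_ne j i with rfl | hji
    · simp
    · simp [Function.update_of_ne hji]
  simp_rw [h]
  rw [Finset.sum_update_of_mem (Finset.mem_univ i)]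
  rw [Finset.sdiff_singleton_eq_erase, Finset.sum_erase_eq_sub (Finset.mem_univ i)]

/-- Sum over strictly decreasing pairs in terms of power sums. -/
lemma sum_pairs {d : ℕ} (x : Fin d → ℝ) :
    2 * ∑ i, ∑ j ∈ Finset.univ.filter (fun j => j < i), x i * x j
      = (∑ i, x i) ^ 2 - ∑ i, x i ^ 2 := by
  have key : ∀ s : Finset (Fin d),
      2 * ∑ i ∈ s, ∑ j ∈ s.filter (fun j => j < i), x i * x j
        = (∑ i ∈ s, x i) ^ 2 - ∑ i ∈ s, x i ^ 2 := by
    intro s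
    induction s using Finset.induction_on_max with
    | empty => simp
    | insert a s ha ih =>
      have hna : a ∉ s := fun h => lt_irrefl a (ha a h)
      have h1 : (insert a s).filter (fun j => j < a) = s := by
        rw [Finset.filter_insert, if_neg (lt_irrefl a), Finset.filter_true_of_mem ha]
      have h2 : ∀ i ∈ s, (insert a s).filter (fun j => j < i) = s.filter (fun j => j < i) := by
        intro i hi
        rw [Finset.filter_insert, if_neg (asymm (ha i hi))]
      have ht : ∑ i ∈ s, ∑ j ∈ (insert a s).filter (fun j => j < i), x i * x j
          = ∑ i ∈ s, ∑ j ∈ s.filter (fun j => j < i), x i * x j :=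
        Finset.sum_congr rfl fun i hi => by rw [h2 i hi]
      rw [Finset.sum_insert hna, h1, ← Finset.mul_sum, ht,
        Finset.sum_insert hna, Finset.sum_insert hna]
      linear_combination ih
  simpa using key Finset.univ

/-- Sum over strictly decreasing triples in terms of power sums. -/
lemma sum_triples {d : ℕ} (x : Fin d → ℝ) :
    6 * ∑ i, ∑ j ∈ Finset.univ.filter (fun j => j < i),
          ∑ k ∈ Finset.univ.filter (fun k => k < j), x i * x j * x k
      = (∑ i, x i) ^ 3 - 3 * (∑ i, x i) * (∑ i, x i ^ 2) + 2 * ∑ i, x i ^ 3 := by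
  have hpair : ∀ s' : Finset (Fin d),
      2 * ∑ i ∈ s', ∑ j ∈ s'.filter (fun j => j < i), x i * x j
        = (∑ i ∈ s', x i) ^ 2 - ∑ i ∈ s', x i ^ 2 := by
    intro s'
    induction s' using Finset.induction_on_max with
    | empty => simp
    | insert a t hat iht =>
      have hnat : a ∉ t := fun h => lt_irrefl a (hat a h)
      have h1 : (insert a t).filter (fun j => j < a) = t := by
        rw [Finset.filter_insert, if_neg (lt_irrefl a), Finset.filter_true_of_mem hat]
      have h2 : ∀ i ∈ t, (insert a t).filter (fun j => j < i) = t.filter (fun j => j < i) := by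
        intro i hi
        rw [Finset.filter_insert, if_neg (asymm (hat i hi))]
      have ht : ∑ i ∈ t, ∑ j ∈ (insert a t).filter (fun j => j < i), x i * x j
          = ∑ i ∈ t, ∑ j ∈ t.filter (fun j => j < i), x i * x j :=
        Finset.sum_congr rfl fun i hi => by rw [h2 i hi]
      rw [Finset.sum_insert hnat, h1, ← Finset.mul_sum, ht,
        Finset.sum_insert hnat, Finset.sum_insert hnat]
      linear_combination iht
  have key : ∀ s : Finset (Fin d),
      6 * ∑ i ∈ s, ∑ j ∈ s.filter (fun j => j < i),
            ∑ k ∈ s.filter (fun k => k < j), x i * x j * x k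
        = (∑ i ∈ s, x i) ^ 3 - 3 * (∑ i ∈ s, x i) * (∑ i ∈ s, x i ^ 2)
            + 2 * ∑ i ∈ s, x i ^ 3 := by
    intro s
    induction s using Finset.induction_on_max with
    | empty => simp
    | insert a s ha ih =>
      have hna : a ∉ s := fun h => lt_irrefl a (ha a h)
      have h1 : (insert a s).filter (fun j => j < a) = s := by
        rw [Finset.filter_insert, if_neg (lt_irrefl a), Finset.filter_true_of_mem ha]
      have h2 : ∀ i ∈ s, (insert a s).filter (fun j => j < i) = s.filter (fun j => j < i) := by
        intro i hi
        rw [Finset.filter_insert, if_neg (asymm (ha i hi))]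
      have hmem : ∀ i ∈ s, ∀ j ∈ s.filter (fun j => j < i), j ∈ s :=
        fun i hi j hj => (Finset.mem_filter.mp hj).1
      have e1 : ∑ j ∈ s, ∑ k ∈ (insert a s).filter (fun k => k < j), x a * x j * x k
          = x a * ∑ j ∈ s, ∑ k ∈ s.filter (fun k => k < j), x j * x k := by
        rw [Finset.mul_sum]
        refine Finset.sum_congr rfl fun j hj => ?_
        rw [h2 j hj, Finset.mul_sum]
        exact Finset.sum_congr rfl fun k _ => by ring
      have e2 : ∑ i ∈ s, ∑ j ∈ (insert a s).filter (fun j => j < i),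
            ∑ k ∈ (insert a s).filter (fun k => k < j), x i * x j * x k
          = ∑ i ∈ s, ∑ j ∈ s.filter (fun j => j < i),
            ∑ k ∈ s.filter (fun k => k < j), x i * x j * x k := by
        refine Finset.sum_congr rfl fun i hi => ?_
        rw [h2 i hi]
        refine Finset.sum_congr rfl fun j hj => ?_
        rw [h2 j (hmem i hi j hj)]
      rw [Finset.sum_insert hna, h1, e1, e2,
        Finset.sum_insert hna, Finset.sum_insert hna, Finset.sum_insert hna]
      linear_combination ih + 3 * x a * hpair s
  simpa using key Finset.univ

lemma poly4_eq {d : ℕ} (c : ℝ) (q : Fin d → ℝ) :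
    poly4 d c q = (1 - c/2) * (∑ i, q i ^ 4) + c/2 * (∑ i, q i ^ 2) ^ 2 := by
  have h := sum_pairs (fun i => q i ^ 2)
  simp only [← pow_mul] at h
  norm_num at h
  unfold poly4
  linear_combination c/2 * h

lemma poly6_eq {d : ℕ} (a b : ℝ) (q : Fin d → ℝ) :
    poly6 d a b q = (1 - a + b/3) * (∑ i, q i ^ 6)
      + (a - b/2) * (∑ i, q i ^ 2) * (∑ i, q i ^ 4)
      + b/6 * (∑ i, q i ^ 2) ^ 3 := by
  have h3 := sum_triples (fun i => q i ^ 2)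
  simp only [← pow_mul] at h3
  norm_num at h3
  have h2 : ∑ i, ∑ j ∈ Finset.univ.filter (fun j => j ≠ i), q i ^ 4 * q j ^ 2
      = (∑ i, q i ^ 4) * (∑ i, q i ^ 2) - ∑ i, q i ^ 6 := by
    have : ∀ i : Fin d, ∑ j ∈ Finset.univ.filter (fun j => j ≠ i), q i ^ 4 * q j ^ 2
        = q i ^ 4 * (∑ j, q j ^ 2) - q i ^ 6 := by
      intro i
      rw [Finset.filter_ne', Finset.sum_erase_eq_sub (Finset.mem_univ i), ← Finset.mul_sum]
      ring
    rw [Finset.sum_congr rfl fun i _ => this i, Finset.sum_sub_distrib, ← Finset.sum_mul]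
  unfold poly6
  rw [h2]
  linear_combination b/6 * h3

lemma deriv_explicit (c0 c1 c2 c3 c4 c5 c6 x : ℝ) :
    deriv (fun s : ℝ => c0 + c1 * s + c2 * s^2 + c3 * s^3 + c4 * s^4 + c5 * s^5 + c6 * s^6) x
      = c1 + 2*c2*x + 3*c3*x^2 + 4*c4*x^3 + 5*c5*x^4 + 6*c6*x^5 := by
  have h : HasDerivAt
      (fun s : ℝ => c0 + c1 * s + c2 * s^2 + c3 * s^3 + c4 * s^4 + c5 * s^5 + c6 * s^6)
      (0 + c1 * 1 + c2 * (↑(2:ℕ) * x ^ (2-1)) + c3 * (↑(3:ℕ) * x ^ (3-1))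
        + c4 * (↑(4:ℕ) * x ^ (4-1)) + c5 * (↑(5:ℕ) * x ^ (5-1)) + c6 * (↑(6:ℕ) * x ^ (6-1))) x := by
    exact ((((((hasDerivAt_const x c0).add ((hasDerivAt_id x).const_mul c1)).add
      ((hasDerivAt_pow 2 x).const_mul c2)).add ((hasDerivAt_pow 3 x).const_mul c3)).add
      ((hasDerivAt_pow 4 x).const_mul c4)).add ((hasDerivAt_pow 5 x).const_mul c5)).add
      ((hasDerivAt_pow 6 x).const_mul c6)
  rw [h.deriv]
  norm_num
  ring

lemma pderiv4 {d : ℕ} (c : ℝ) (j : Fin d) :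
    pderivCoord j (poly4 d c)
      = fun q => (4 - 2*c) * q j ^ 3 + 2*c* q j * (∑ i, q i ^ 2) := by
  funext q
  show deriv (fun s => poly4 d c (Function.update q j s)) (q j) = _
  have hfun : (fun s => poly4 d c (Function.update q j s))
      = fun s => ((1-c/2)*((∑ i, q i ^ 4) - q j ^ 4) + c/2*((∑ i, q i ^ 2) - q j ^ 2)^2)
          + 0 * s + (c * ((∑ i, q i ^ 2) - q j ^ 2)) * s^2 + 0 * s^3 + 1 * s^4
          + 0 * s^5 + 0 * s^6 := by
    funext s
    rw [poly4_eq, sum_update_pow, sum_update_pow]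
    ring
  rw [hfun, deriv_explicit]
  ring

lemma pderiv6 {d : ℕ} (a b : ℝ) (j : Fin d) :
    pderivCoord j (poly6 d a b)
      = fun q => (6 - 6*a + 2*b) * q j ^ 5 + (4*a - 2*b) * q j ^ 3 * (∑ i, q i ^ 2)
          + (2*a - b) * q j * (∑ i, q i ^ 4) + b * q j * (∑ i, q i ^ 2) ^ 2 := by
  funext q
  show deriv (fun s => poly6 d a b (Function.update q j s)) (q j) = _
  have hfun : (fun s => poly6 d a b (Function.update q j s))
      = fun s => ((1 - a + b/3) * ((∑ i, q i ^ 6) - q j ^ 6)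
            + (a - b/2) * ((∑ i, q i ^ 2) - q j ^ 2) * ((∑ i, q i ^ 4) - q j ^ 4)
            + b/6 * ((∑ i, q i ^ 2) - q j ^ 2)^3)
          + 0 * s
          + ((a - b/2) * ((∑ i, q i ^ 4) - q j ^ 4) + b/2 * ((∑ i, q i ^ 2) - q j ^ 2)^2) * s^2
          + 0 * s^3
          + ((a - b/2) * ((∑ i, q i ^ 2) - q j ^ 2) + b/2 * ((∑ i, q i ^ 2) - q j ^ 2)) * s^4
          + 0 * s^5
          + 1 * s^6 := by
    funext s
    rw [poly6_eq, sum_update_pow, sum_update_pow, sum_update_pow]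
    ring
  rw [hfun, deriv_explicit]
  ring

lemma hess4 {d : ℕ} (c : ℝ) (q : Fin d → ℝ) (i j : Fin d) :
    hessian (poly4 d c) q i j
      = if i = j then 12 * q i ^ 2 + 2*c*((∑ k, q k ^ 2) - q i ^ 2)
        else 4*c*q i*q j := by
  show deriv (fun s => pderivCoord j (poly4 d c) (Function.update q i s)) (q i) = _
  rcases eq_or_ne i j with rfl | hij
  · have hfun : (fun s => pderivCoord i (poly4 d c) (Function.update q i s))
        = fun s => 0 + (2*c*((∑ k, q k ^ 2) - q i ^ 2)) * s + 0*s^2 + 4*s^3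
            + 0*s^4 + 0*s^5 + 0*s^6 := by
      funext s
      rw [pderiv4]
      beta_reduce
      rw [sum_update_pow, Function.update_self]
      ring
    rw [hfun, deriv_explicit, if_pos rfl]
    ring
  · have hfun : (fun s => pderivCoord j (poly4 d c) (Function.update q i s))
        = fun s => ((4-2*c) * q j ^ 3 + 2*c*q j*((∑ k, q k ^ 2) - q i ^ 2)) + 0 * s
            + (2*c*q j)*s^2 + 0*s^3 + 0*s^4 + 0*s^5 + 0*s^6 := by
      funext s
      rw [pderiv4]
      beta_reduce
      rw [sum_update_pow, Function.update_of_ne (Ne.symm hij)]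
      ring
    rw [hfun, deriv_explicit, if_neg hij]
    ring

lemma hess6 {d : ℕ} (a b : ℝ) (q : Fin d → ℝ) (i j : Fin d) :
    hessian (poly6 d a b) q i j
      = if i = j then
          30 * q i ^ 4 + 12*a*((∑ k, q k ^ 2) - q i ^ 2) * q i ^ 2
            + (2*a - b) * ((∑ k, q k ^ 4) - q i ^ 4) + b * ((∑ k, q k ^ 2) - q i ^ 2)^2
        else
          (8*a - 4*b) * (q i * q j ^ 3 + q i ^ 3 * q j)
            + 4*b*(∑ k, q k ^ 2)*q i*q j := by
  show deriv (fun s => pderivCoord j (poly6 d a b) (Function.update q i s)) (q i) = _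
  rcases eq_or_ne i j with rfl | hij
  · have hfun : (fun s => pderivCoord i (poly6 d a b) (Function.update q i s))
        = fun s => 0
            + ((2*a - b) * ((∑ k, q k ^ 4) - q i ^ 4) + b * ((∑ k, q k ^ 2) - q i ^ 2)^2) * s
            + 0*s^2
            + ((4*a - 2*b) * ((∑ k, q k ^ 2) - q i ^ 2) + 2*b*((∑ k, q k ^ 2) - q i ^ 2)) * s^3
            + 0*s^4
            + ((6 - 6*a + 2*b) + (4*a - 2*b) + (2*a - b) + b) * s^5
            + 0*s^6 := by
      funext s
      rw [pderiv6]
      beta_reduce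
      rw [sum_update_pow, sum_update_pow, Function.update_self]
      ring
    rw [hfun, deriv_explicit, if_pos rfl]
    ring
  · have hfun : (fun s => pderivCoord j (poly6 d a b) (Function.update q i s))
        = fun s => ((6 - 6*a + 2*b) * q j ^ 5
              + (4*a - 2*b) * q j ^ 3 * ((∑ k, q k ^ 2) - q i ^ 2)
              + (2*a - b) * q j * ((∑ k, q k ^ 4) - q i ^ 4)
              + b * q j * ((∑ k, q k ^ 2) - q i ^ 2)^2)
            + 0 * s
            + ((4*a - 2*b) * q j ^ 3 + 2*b*q j*((∑ k, q k ^ 2) - q i ^ 2)) * s^2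
            + 0*s^3
            + ((2*a - b) * q j + b * q j) * s^4
            + 0*s^5 + 0*s^6 := by
      funext s
      rw [pderiv6]
      beta_reduce
      rw [sum_update_pow, sum_update_pow, Function.update_of_ne (Ne.symm hij)]
      ring
    rw [hfun, deriv_explicit, if_neg hij]
    ring

set_option maxHeartbeats 1000000 in
theorem stmt_10 (d : ℕ) (hd : 3 ≤ d) (c a b : ℝ) (hc12 : c ≠ 12) (hc3 : c ≠ -3)
    (ha : a = 15 * c / (12 - c)) (hb : b = 75 * c ^ 2 / ((12 - c) * (3 + c))) :
    ∀ q : Fin d → ℝ,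
      hessian (poly4 d c) q * hessian (poly6 d a b) q
        = hessian (poly6 d a b) q * hessian (poly4 d c) q := by
  have h12 : (12:ℝ) - c ≠ 0 := fun h => hc12 (by linarith)
  have h3 : (3:ℝ) + c ≠ 0 := fun h => hc3 (by linarith)
  intro q
  ext i j
  rw [Matrix.mul_apply, Matrix.mul_apply]
  by_cases hij : i = j
  · subst hij
    refine Finset.sum_congr rfl fun k _ => ?_
    rcases eq_or_ne i k with rfl | hik
    · rw [hess4, hess6]
      ring
    · rw [hess4, hess6, hess4, hess6,
        if_neg hik, if_neg (Ne.symm hik), if_neg hik, if_neg (Ne.symm hik)]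
      ring
  · have hji : j ≠ i := Ne.symm hij
    have hjmem : j ∈ Finset.univ.erase i := Finset.mem_erase.mpr ⟨hji, Finset.mem_univ j⟩
    have hsplit : ∀ g : Fin d → ℝ,
        ∑ k, g k = g i + (g j + ∑ k ∈ (Finset.univ.erase i).erase j, g k) := by
      intro g
      rw [← Finset.add_sum_erase _ g (Finset.mem_univ i), ← Finset.add_sum_erase _ g hjmem]
    have tail2 : ∑ k ∈ (Finset.univ.erase i).erase j, q k ^ 2
        = (∑ k, q k ^ 2) - q i ^ 2 - q j ^ 2 := by
      rw [Finset.sum_erase_eq_sub hjmem, Finset.sum_erase_eq_sub (Finset.mem_univ i)]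
    have tail4 : ∑ k ∈ (Finset.univ.erase i).erase j, q k ^ 4
        = (∑ k, q k ^ 4) - q i ^ 4 - q j ^ 4 := by
      rw [Finset.sum_erase_eq_sub hjmem, Finset.sum_erase_eq_sub (Finset.mem_univ i)]
    have memfacts : ∀ k ∈ (Finset.univ.erase i).erase j, k ≠ j ∧ k ≠ i := by
      intro k hk
      exact ⟨(Finset.mem_erase.mp hk).1, (Finset.mem_erase.mp (Finset.mem_erase.mp hk).2).1⟩
    have tailL : ∑ k ∈ (Finset.univ.erase i).erase j,
          hessian (poly4 d c) q i k * hessian (poly6 d a b) q k j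
        = (4*c*(8*a-4*b)*q i*q j^3 + 16*c*b*(∑ k, q k ^ 2)*q i*q j)
              * ((∑ k, q k ^ 2) - q i ^ 2 - q j ^ 2)
            + (4*c*(8*a-4*b)*q i*q j) * ((∑ k, q k ^ 4) - q i ^ 4 - q j ^ 4) := by
      rw [show ∑ k ∈ (Finset.univ.erase i).erase j,
            hessian (poly4 d c) q i k * hessian (poly6 d a b) q k j
          = ∑ k ∈ (Finset.univ.erase i).erase j,
            ((4*c*(8*a-4*b)*q i*q j^3 + 16*c*b*(∑ k, q k ^ 2)*q i*q j) * q k ^ 2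
              + (4*c*(8*a-4*b)*q i*q j) * q k ^ 4) from
        Finset.sum_congr rfl fun k hk => by
          obtain ⟨hkj, hki⟩ := memfacts k hk
          rw [hess4, hess6, if_neg (fun h => hki h.symm), if_neg hkj]
          ring]
      rw [Finset.sum_add_distrib, ← Finset.mul_sum, ← Finset.mul_sum, tail2, tail4]
    have tailR : ∑ k ∈ (Finset.univ.erase i).erase j,
          hessian (poly6 d a b) q i k * hessian (poly4 d c) q k j
        = (4*c*(8*a-4*b)*q i^3*q j + 16*c*b*(∑ k, q k ^ 2)*q i*q j)
              * ((∑ k, q k ^ 2) - q i ^ 2 - q j ^ 2)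
            + (4*c*(8*a-4*b)*q i*q j) * ((∑ k, q k ^ 4) - q i ^ 4 - q j ^ 4) := by
      rw [show ∑ k ∈ (Finset.univ.erase i).erase j,
            hessian (poly6 d a b) q i k * hessian (poly4 d c) q k j
          = ∑ k ∈ (Finset.univ.erase i).erase j,
            ((4*c*(8*a-4*b)*q i^3*q j + 16*c*b*(∑ k, q k ^ 2)*q i*q j) * q k ^ 2
              + (4*c*(8*a-4*b)*q i*q j) * q k ^ 4) from
        Finset.sum_congr rfl fun k hk => by
          obtain ⟨hkj, hki⟩ := memfacts k hk
          rw [hess6, hess4, if_neg (fun h => hki h.symm), if_neg hkj]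
          ring]
      rw [Finset.sum_add_distrib, ← Finset.mul_sum, ← Finset.mul_sum, tail2, tail4]
    calc ∑ k, hessian (poly4 d c) q i k * hessian (poly6 d a b) q k j
        = hessian (poly4 d c) q i i * hessian (poly6 d a b) q i j
            + (hessian (poly4 d c) q i j * hessian (poly6 d a b) q j j
              + ∑ k ∈ (Finset.univ.erase i).erase j,
                  hessian (poly4 d c) q i k * hessian (poly6 d a b) q k j) :=
          hsplit (fun k => hessian (poly4 d c) q i k * hessian (poly6 d a b) q k j)
      _ = hessian (poly6 d a b) q i i * hessian (poly4 d c) q i j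
            + (hessian (poly6 d a b) q i j * hessian (poly4 d c) q j j
              + ∑ k ∈ (Finset.univ.erase i).erase j,
                  hessian (poly6 d a b) q i k * hessian (poly4 d c) q k j) := by
          rw [tailL, tailR, hess4 c q i i, hess4 c q i j, hess4 c q j j,
            hess6 a b q i i, hess6 a b q i j, hess6 a b q j j,
            if_pos rfl, if_pos rfl, if_pos rfl, if_pos rfl, if_neg hij, if_neg hij]
          rw [ha, hb]
          field_simp
          ring
      _ = ∑ k, hessian (poly6 d a b) q i k * hessian (poly4 d c) q k j :=
          (hsplit (fun k => hessian (poly6 d a b) q i k * hessian (poly4 d c) q k j)).symm
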